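/- For every even positive integer m and α ∈ (0,1/2), define I_m(α) = ∫₀^{2πα} cos(x)(cos(mx) − 1) dx. Then I_m satisfies the symmetry I_m(α) = I_m(1/2 − α), and I_m(α) ≤ 0 for all α ∈ (0, 1/2). -/

import Mathlib

open Real intervalIntegral

private lemma Im_closed_form (m : ℕ) (hm : 2 ≤ m) (t : ℝ) :
    (∫ x in (0 : ℝ)..t, Real.cos x * (Real.cos (m * x) - 1)) =
      (Real.sin (((m : ℝ) + 1) * t) / (2 * ((m : ℝ) + 1))
        + Real.sin (((m : ℝ) - 1) * t) / (2 * ((m : ℝ) - 1)) - Real.sin t) := by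
  have hm1 : (1 : ℝ) < (m : ℝ) := by exact_mod_cast hm.trans_lt' one_lt_two
  have ha : ((m : ℝ) + 1) ≠ 0 := by nlinarith
  have hb : ((m : ℝ) - 1) ≠ 0 := by nlinarith
  set G : ℝ → ℝ := fun x => Real.sin (((m : ℝ) + 1) * x) / (2 * ((m : ℝ) + 1))
        + Real.sin (((m : ℝ) - 1) * x) / (2 * ((m : ℝ) - 1)) - Real.sin x with hG
  have hderiv : ∀ x ∈ Set.uIcc (0 : ℝ) t, HasDerivAt G
      (Real.cos x * (Real.cos (m * x) - 1)) x := by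
    intro x _
    have h1 : HasDerivAt (fun x => Real.sin (((m : ℝ) + 1) * x))
        (((m : ℝ) + 1) * Real.cos (((m : ℝ) + 1) * x)) x := by
      simpa [mul_comm] using (((hasDerivAt_id x).const_mul ((m : ℝ) + 1)).sin)
    have h2 : HasDerivAt (fun x => Real.sin (((m : ℝ) - 1) * x))
        (((m : ℝ) - 1) * Real.cos (((m : ℝ) - 1) * x)) x := by
      simpa [mul_comm] using (((hasDerivAt_id x).const_mul ((m : ℝ) - 1)).sin)
    have h := ((h1.div_const (2 * ((m : ℝ) + 1))).add
      (h2.div_const (2 * ((m : ℝ) - 1)))).sub (Real.hasDerivAt_sin x)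
    refine h.congr_deriv ?_
    have e1 : ((m : ℝ) + 1) * x = (m : ℝ) * x + x := by ring
    have e2 : ((m : ℝ) - 1) * x = (m : ℝ) * x - x := by ring
    rw [e1, e2, Real.cos_add, Real.cos_sub]
    field_simp
    ring
  have hint : IntervalIntegrable (fun x => Real.cos x * (Real.cos (m * x) - 1))
      MeasureTheory.volume 0 t := by
    apply Continuous.intervalIntegrable
    continuity
  have := intervalIntegral.integral_eq_sub_of_hasDerivAt hderiv hint
  simp [hG] at this
  simpa [hG] using this

/-- For even positive `m` and `α ∈ (0, 1/2)`, with
`I_m(α) = ∫₀^{2πα} cos x (cos(mx) - 1) dx`, one has the symmetry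
`I_m(α) = I_m(1/2 - α)` and `I_m(α) ≤ 0`. -/
theorem Im_even_nonpos (m : ℕ) (hm : 0 < m) (hme : Even m)
    (I : ℝ → ℝ)
    (hI : I = fun α => ∫ x in (0 : ℝ)..(2 * π * α),
      Real.cos x * (Real.cos (m * x) - 1)) :
    ∀ α : ℝ, 0 < α → α < 1 / 2 → I α = I (1 / 2 - α) ∧ I α ≤ 0 := by
  have hm2 : 2 ≤ m := by
    rcases hme with ⟨k, hk⟩; omega
  -- symmetry of the closed form
  have hodd1 : Odd (m + 1) := hme.add_one
  have hodd2 : Odd (m - 1) := by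
    rcases hme with ⟨k, hk⟩
    exact ⟨k - 1, by omega⟩
  have hcast1 : ((m : ℝ) + 1) = ((m + 1 : ℕ) : ℝ) := by push_cast; ring
  have hcast2 : ((m : ℝ) - 1) = ((m - 1 : ℕ) : ℝ) := by
    have : (1 : ℕ) ≤ m := hm
    push_cast [this]; ring
  have hsym : ∀ t : ℝ, I ((1 : ℝ) / 2 - t) = I t := by
    intro t
    have h1 : 2 * π * ((1 : ℝ) / 2 - t) = π - 2 * π * t := by ring
    rw [hI]
    simp only
    rw [Im_closed_form m hm2, Im_closed_form m hm2, h1]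
    set s := 2 * π * t with hs
    have e1 : ((m : ℝ) + 1) * (π - s) = (m + 1 : ℕ) * π - ((m : ℝ) + 1) * s := by
      rw [hcast1]; ring
    have e2 : ((m : ℝ) - 1) * (π - s) = (m - 1 : ℕ) * π - ((m : ℝ) - 1) * s := by
      rw [hcast2]; ring
    rw [e1, e2, Real.sin_nat_mul_pi_sub, Real.sin_nat_mul_pi_sub,
      Odd.neg_one_pow hodd1, Odd.neg_one_pow hodd2, Real.sin_pi_sub]
    ring
  intro α hα0 hα2
  constructor
  · rw [← hsym α]
  · -- nonpositivity
    have key : ∀ β : ℝ, 0 < β → β ≤ 1 / 4 → I β ≤ 0 := by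
      intro β hβ0 hβ4
      rw [hI]
      simp only
      have hb : (0 : ℝ) ≤ 2 * π * β := by positivity
      have h := intervalIntegral.integral_nonneg (μ := MeasureTheory.volume) (f := fun x =>
          -(Real.cos x * (Real.cos (m * x) - 1))) hb ?_
      · rw [intervalIntegral.integral_neg] at h; linarith
      · intro u hu
        simp only [Set.mem_Icc] at hu
        have hu2 : u ≤ π / 2 := by
          have : 2 * π * β ≤ π / 2 := by nlinarith [Real.pi_pos]
          linarith [hu.2]
        have hcos : 0 ≤ Real.cos u :=
          Real.cos_nonneg_of_mem_Icc ⟨by linarith [hu.1, Real.pi_pos], hu2⟩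
        have hle : Real.cos ((m : ℝ) * u) - 1 ≤ 0 := by
          linarith [Real.cos_le_one ((m : ℝ) * u)]
        have hmp : Real.cos u * (Real.cos ((m : ℝ) * u) - 1) ≤ 0 := by nlinarith
        simpa using hmp
    by_cases h4 : α ≤ 1 / 4
    · exact key α hα0 h4
    · rw [← hsym α]
      exact key (1 / 2 - α) (by linarith) (by linarith)
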